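/- Let α₁, α₂, …, α_k (k ≥ 4) be a cyclic sequence of k angles, each from the set {0°, 90°, 180°, 270°, 360°}, whose sum equals k·180° − 360°. Then either the sequence is exactly (90°, 90°, 90°, 90°) with k = 4, or there exist two cyclically adjacent entries (γ, δ) with γ ∈ {180°, 270°, 360°} and δ ∈ {0°, 90°}, or with δ ∈ {180°, 270°, 360°} and γ ∈ {0°, 90°}. -/
import Mathlib


/-- A cyclic sequence of `k ≥ 4` angles from `{0,90,180,270,360}`
summing to `k·180 − 360` is either constantly `90` (with `k = 4`) or contains a
cyclically adjacent pair with one entry in `{180,270,360}` and the other in `{0,90}`. -/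
theorem stmt_0 (k : ℕ) [NeZero k] (hk : 4 ≤ k) (f : ZMod k → ℕ)
    (hmem : ∀ i, f i ∈ ({0, 90, 180, 270, 360} : Set ℕ))
    (hsum : ∑ i, f i = k * 180 - 360) :
    (k = 4 ∧ ∀ i, f i = 90) ∨
      ∃ i : ZMod k,
        (f i ∈ ({180, 270, 360} : Set ℕ) ∧ f (i + 1) ∈ ({0, 90} : Set ℕ)) ∨
        (f i ∈ ({0, 90} : Set ℕ) ∧ f (i + 1) ∈ ({180, 270, 360} : Set ℕ)) := by
  by_cases hex : ∃ i : ZMod k,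
        (f i ∈ ({180, 270, 360} : Set ℕ) ∧ f (i + 1) ∈ ({0, 90} : Set ℕ)) ∨
        (f i ∈ ({0, 90} : Set ℕ) ∧ f (i + 1) ∈ ({180, 270, 360} : Set ℕ))
  · exact Or.inr hex
  push_neg at hex
  -- dichotomy: every value is small (≤ 90) or big (≥ 180)
  have hdich : ∀ i, f i ≤ 90 ∨ 180 ≤ f i := by
    intro i
    have := hmem i
    simp only [Set.mem_insert_iff, Set.mem_singleton_iff] at this
    rcases this with h | h | h | h | h <;> omega
  -- smallness propagates along the cycle
  have hstep : ∀ i, (f i ≤ 90 ↔ f (i + 1) ≤ 90) := by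
    intro i
    have h1 := (hex i).1
    have h2 := (hex i).2
    have m1 := hmem i
    have m2 := hmem (i + 1)
    simp only [Set.mem_insert_iff, Set.mem_singleton_iff] at h1 h2 m1 m2
    constructor
    · intro hs
      rcases hdich (i + 1) with h | h
      · exact h
      · exfalso
        apply h2 <;> omega
    · intro hs
      rcases hdich i with h | h
      · exact h
      · exfalso
        apply h1 <;> omega
  have hconst : ∀ n : ℕ, (f (n : ZMod k) ≤ 90 ↔ f 0 ≤ 90) := by
    intro n
    induction n with
    | zero => simp
    | succ m ih =>
      push_cast
      rw [← hstep (m : ZMod k)]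
      exact ih
  have hall : ∀ i : ZMod k, (f i ≤ 90 ↔ f 0 ≤ 90) := by
    intro i
    have : ((i.val : ℕ) : ZMod k) = i := ZMod.natCast_rightInverse i
    rw [← this]
    exact hconst i.val
  have hcard : (Finset.univ : Finset (ZMod k)).card = k := by
    simp [ZMod.card k]
  rcases hdich 0 with h0 | h0
  · -- all small
    have hsmall : ∀ i : ZMod k, f i ≤ 90 := fun i => (hall i).2 h0
    have hle : ∑ i, f i ≤ (Finset.univ : Finset (ZMod k)).card • 90 :=
      Finset.sum_le_card_nsmul _ _ _ (fun i _ => hsmall i)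
    rw [hcard, smul_eq_mul] at hle
    have hk4 : k = 4 := by omega
    left
    refine ⟨hk4, ?_⟩
    intro j
    by_contra hj
    have hjlt : f j < 90 := lt_of_le_of_ne (hsmall j) hj
    have : ∑ i, f i < ∑ _i : ZMod k, 90 := by
      apply Finset.sum_lt_sum (fun i _ => hsmall i)
      exact ⟨j, Finset.mem_univ j, hjlt⟩
    rw [Finset.sum_const, hcard, smul_eq_mul] at this
    omega
  · -- all big
    exfalso
    have hbig : ∀ i : ZMod k, 180 ≤ f i := by
      intro i
      rcases hdich i with h | h
      · exfalso
        have := (hall i).1 h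
        omega
      · exact h
    have hge : (Finset.univ : Finset (ZMod k)).card • 180 ≤ ∑ i, f i :=
      Finset.card_nsmul_le_sum _ _ _ (fun i _ => hbig i)
    rw [hcard, smul_eq_mul] at hge
    omega
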